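/- Rodrigues formula on B(1): for every left solid inner Dunkl monogenic M_k of order k, every α > -1 and every positive integer t, C^α_{t,μ}(M_k) = (1-|x̱|²)^{-α} D_k^t[(1-|x̱|²)^{α+t} M_k]. -/

import Mathlib

open scoped BigOperators RealInnerProductSpace
open MeasureTheory

namespace CGDunkl

/-- The underlying Euclidean space `ℝ^m`. -/
abbrev V (m : ℕ) := EuclideanSpace ℝ (Fin m)

/-- The quadratic form `x ↦ -‖x‖²` on `ℝ^m`, whose Clifford algebra is `ℝ_{0,m}`
(so that `eᵢ eⱼ + eⱼ eᵢ = -2 δᵢⱼ`). -/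
noncomputable def Q (m : ℕ) : QuadraticForm ℝ (V m) :=
  - LinearMap.BilinMap.toQuadraticMap (innerₗ (V m))

/-- A (normed) model of the Clifford algebra `ℝ_{0,m}`: an `ℝ`-algebra isomorphism from
the Clifford algebra of `-‖·‖²` on `ℝ^m` to a normed algebra `A`. -/
abbrev CliffordModel (m : ℕ) (A : Type*) [NormedRing A] [NormedAlgebra ℝ A] :=
  CliffordAlgebra (Q m) ≃ₐ[ℝ] A

variable {m : ℕ} {A : Type*} [NormedRing A] [NormedAlgebra ℝ A]

/-- The Clifford generators `e_j`. -/
noncomputable def ee (F : CliffordModel m A) (j : Fin m) : A :=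
  F (CliffordAlgebra.ι (Q m) (EuclideanSpace.single j 1))

/-- The vector variable `x̱ = Σⱼ eⱼ xⱼ`. -/
noncomputable def xv (F : CliffordModel m A) (x : V m) : A :=
  F (CliffordAlgebra.ι (Q m) x)

/-- Clifford conjugation, the anti-involution with `conj eᵢ = -eᵢ`
(the composition of grade reversion and grade involution). -/
noncomputable def cconj (F : CliffordModel m A) (a : A) : A :=
  F (CliffordAlgebra.reverse (CliffordAlgebra.involute (F.symm a)))

/-- The reflection in the hyperplane orthogonal to `α`. -/
noncomputable def reflect {m : ℕ} (α x : V m) : V m :=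
  x - ((2 * ⟪α, x⟫) / ⟪α, α⟫) • α

/-- The data of a (reduced, normalized) root system `R = R₊ ∪ (-R₊)` in `ℝ^m`
together with a nonnegative `G`-invariant multiplicity function `κ`. -/
structure DunklData (m : ℕ) where
  /-- the root system -/
  R : Finset (V m)
  /-- the positive subsystem -/
  Rplus : Finset (V m)
  /-- the multiplicity function -/
  κ : V m → ℝ
  root_ne_zero : ∀ α ∈ R, α ≠ 0
  /-- normalization `⟨α, α⟩ = 2` -/
  norm_two : ∀ α ∈ R, ⟪α, α⟫ = (2 : ℝ)
  /-- the root system is reduced -/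
  reduced : ∀ α ∈ R, ∀ c : ℝ, c • α ∈ R → c = 1 ∨ c = -1
  /-- `R` is preserved by each reflection `r_α`, `α ∈ R` -/
  stable : ∀ α ∈ R, ∀ β ∈ R, reflect α β ∈ R
  /-- `R` is the union of `R₊` and `-R₊` -/
  split : ∀ α : V m, α ∈ R ↔ (α ∈ Rplus ∨ -α ∈ Rplus)
  pos_disjoint : ∀ α ∈ Rplus, -α ∉ Rplus
  /-- the multiplicity function is invariant under the reflection group -/
  invariant : ∀ α ∈ R, ∀ β ∈ R, κ (reflect α β) = κ β
  nonneg : ∀ α ∈ R, 0 ≤ κ α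

/-- `γ = Σ_{α ∈ R₊} κ_α`. -/
noncomputable def gammaK (D : DunklData m) : ℝ := ∑ α ∈ D.Rplus, D.κ α

/-- The Dunkl dimension `μ = m + 2γ`. -/
noncomputable def mu (D : DunklData m) : ℝ := m + 2 * gammaK D

/-- The Dunkl operator `T_i`, acting on functions with values in the Clifford algebra. -/
noncomputable def T (D : DunklData m) (i : Fin m) (f : V m → A) (x : V m) : A :=
  fderiv ℝ f x (EuclideanSpace.single i 1) +
    ∑ α ∈ D.Rplus, (D.κ α * (α i) / ⟪α, x⟫) • (f x - f (reflect α x))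

/-- The Dunkl Dirac operator `D_k = Σⱼ eⱼ T_j`. -/
noncomputable def Dirac (F : CliffordModel m A) (D : DunklData m) (f : V m → A) (x : V m) : A :=
  ∑ j : Fin m, ee F j * T D j f x

/-- The Dunkl Laplacian `Δ_k = Σᵢ Tᵢ²`. -/
noncomputable def Lap (D : DunklData m) (f : V m → A) (x : V m) : A :=
  ∑ i : Fin m, T D i (T D i f) x

/-- The Euler operator `𝔼 = Σᵢ xᵢ ∂_{xᵢ}`. -/
noncomputable def Euler (f : V m → A) (x : V m) : A := fderiv ℝ f x x

/-- The angular Dunkl Dirac operator (Gamma operator) `Γ_k = D_k x̱ + μ + 𝔼`. -/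
noncomputable def Gam (F : CliffordModel m A) (D : DunklData m) (f : V m → A) (x : V m) : A :=
  Dirac F D (fun y => xv F y * f y) x + mu D • f x + Euler f x

/-- The regular set: the complement of the hyperplane arrangement, where the pointwise
formula for the Dunkl operators is valid. -/
def Reg (D : DunklData m) : Set (V m) := {x | ∀ α ∈ D.Rplus, ⟪α, x⟫ ≠ 0}

/-- Left solid inner Dunkl monogenic of order `k`: a smooth function, homogeneous (as a
polynomial) of degree `k`, with `D_k M = 0`. -/
def IsInner (F : CliffordModel m A) (D : DunklData m) (k : ℕ) (M : V m → A) : Prop :=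
  ContDiff ℝ ⊤ M ∧ (∀ (c : ℝ) (x : V m), M (c • x) = c ^ k • M x) ∧
    ∀ x ∈ Reg D, Dirac F D M x = 0

/-- Left solid outer Dunkl monogenic of order `k`: left Dunkl monogenic on `ℝ^m ∖ {0}` and
homogeneous of degree `-(k + μ - 1)`. -/
def IsOuter (F : CliffordModel m A) (D : DunklData m) (k : ℕ) (Qf : V m → A) : Prop :=
  ContDiffOn ℝ ⊤ Qf {x | x ≠ 0} ∧
    (∀ c : ℝ, 0 < c → ∀ x : V m, x ≠ 0 →
      Qf (c • x) = ((c : ℝ) ^ (-((k : ℝ) + mu D - 1)) : ℝ) • Qf x) ∧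
    ∀ x ∈ Reg D, x ≠ 0 → Dirac F D Qf x = 0

/-- The weight function `w_k(x) = Π_{α ∈ R₊} |⟨x, α⟩|^{2 κ_α}`. -/
noncomputable def w (D : DunklData m) (x : V m) : ℝ :=
  ∏ α ∈ D.Rplus, |⟪x, α⟫| ^ (2 * D.κ α)


variable {m : ℕ} {A : Type*} [NormedRing A] [NormedAlgebra ℝ A]

/-- The operator `D_α = (1-|x̱|²) D_k - 2(α+1) x̱` on the unit ball. -/
noncomputable def Dal (F : CliffordModel m A) (D : DunklData m) (a : ℝ)
    (f : V m → A) (x : V m) : A :=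
  (1 - ‖x‖ ^ 2) • Dirac F D f x - (2 * (a + 1)) • (xv F x * f x)

/-- The Clifford-Gegenbauer polynomials on `B(1)`:
`C^α_{t,μ}(M_k) = D_α D_{α+1} ⋯ D_{α+t-1}[M_k]` (with `C^α_{0,μ}(M_k) = M_k`). -/
noncomputable def CG (F : CliffordModel m A) (D : DunklData m) :
    ℝ → ℕ → (V m → A) → (V m → A)
  | _, 0, M => M
  | a, t + 1, M => Dal F D a (CG F D (a + 1) t M)

/-! ### Auxiliary material for the Rodrigues formula -/

section RodriguesAux

variable {m : ℕ} {A : Type*} [NormedRing A] [NormedAlgebra ℝ A]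

/-- The open set on which everything happens: unit ball intersected with the regular set. -/
def UU (D : DunklData m) : Set (V m) := Metric.ball (0 : V m) 1 ∩ Reg D

lemma isOpen_Reg (D : DunklData m) : IsOpen (Reg D) := by
  have h : Reg D = ⋂ α ∈ D.Rplus, {x : V m | ⟪α, x⟫ ≠ 0} := by
    ext x; simp [Reg]
  rw [h]
  refine isOpen_biInter_finset fun α _ => ?_
  have hc : Continuous fun x : V m => ⟪α, x⟫ := Continuous.inner continuous_const continuous_id
  exact IsOpen.preimage hc isOpen_ne

lemma isOpen_UU (D : DunklData m) : IsOpen (UU D) :=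
  Metric.isOpen_ball.inter (isOpen_Reg D)

lemma mem_R_of_plus (D : DunklData m) {α : V m} (hα : α ∈ D.Rplus) : α ∈ D.R :=
  (D.split α).2 (Or.inl hα)

lemma reflect_eq {α : V m} (hn : ⟪α, α⟫ = (2 : ℝ)) (x : V m) :
    reflect α x = x - ⟪α, x⟫ • α := by
  rw [reflect, hn]
  congr 1
  congr 1
  ring

lemma norm_reflect {α : V m} (hn : ⟪α, α⟫ = (2 : ℝ)) (x : V m) :
    ‖reflect α x‖ = ‖x‖ := by
  have h : ‖reflect α x‖ ^ 2 = ‖x‖ ^ 2 := by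
    rw [reflect_eq hn, ← real_inner_self_eq_norm_sq, ← real_inner_self_eq_norm_sq]
    simp only [inner_sub_left, inner_sub_right, real_inner_smul_left, real_inner_smul_right, hn]
    rw [real_inner_comm α x]
    ring
  nlinarith [norm_nonneg (reflect α x), norm_nonneg x]

lemma inner_reflect {α : V m} (hn : ⟪α, α⟫ = (2 : ℝ)) (β x : V m) :
    ⟪β, reflect α x⟫ = ⟪reflect α β, x⟫ := by
  rw [reflect_eq hn, reflect_eq hn]
  simp only [inner_sub_left, inner_sub_right, real_inner_smul_left, real_inner_smul_right]
  rw [real_inner_comm α β]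
  ring

lemma reflect_mem_Reg (D : DunklData m) {α : V m} (hα : α ∈ D.Rplus) {x : V m}
    (hx : x ∈ Reg D) : reflect α x ∈ Reg D := by
  intro β hβ
  have hn : ⟪α, α⟫ = (2 : ℝ) := D.norm_two α (mem_R_of_plus D hα)
  rw [inner_reflect hn]
  have hβR : reflect α β ∈ D.R := D.stable α (mem_R_of_plus D hα) β (mem_R_of_plus D hβ)
  rcases (D.split (reflect α β)).1 hβR with h | h
  · exact hx _ h
  · have := hx _ h
    rw [inner_neg_left] at this
    intro hc; exact this (by rw [hc, neg_zero])

lemma reflect_mem_UU (D : DunklData m) {α : V m} (hα : α ∈ D.Rplus) {x : V m}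
    (hx : x ∈ UU D) : reflect α x ∈ UU D := by
  refine ⟨?_, reflect_mem_Reg D hα hx.2⟩
  have hn : ⟪α, α⟫ = (2 : ℝ) := D.norm_two α (mem_R_of_plus D hα)
  have := hx.1
  rw [Metric.mem_ball, dist_zero_right] at this ⊢
  rwa [norm_reflect hn]

lemma contDiff_reflect (α : V m) : ContDiff ℝ ⊤ fun x : V m => reflect α x := by
  unfold reflect
  exact contDiff_id.sub
    (((contDiff_const.mul (ContDiff.inner ℝ contDiff_const contDiff_id)).div_const _).smul
      contDiff_const)

lemma norm_lt_one_of_mem (D : DunklData m) {x : V m} (hx : x ∈ UU D) : ‖x‖ < 1 := by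
  have := hx.1
  rwa [Metric.mem_ball, dist_zero_right] at this

lemma one_sub_sq_pos (D : DunklData m) {x : V m} (hx : x ∈ UU D) : (0 : ℝ) < 1 - ‖x‖ ^ 2 := by
  have h := norm_lt_one_of_mem D hx
  nlinarith [norm_nonneg x]

/-- The Dunkl operator depends only on local behaviour on a reflection-stable open set. -/
lemma T_congr (D : DunklData m) {f g : V m → A} (hfg : Set.EqOn f g (UU D)) {x : V m}
    (hx : x ∈ UU D) (i : Fin m) : T D i f x = T D i g x := by
  have hev : f =ᶠ[nhds x] g :=
    Filter.eventuallyEq_of_mem ((isOpen_UU D).mem_nhds hx) hfg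
  unfold T
  rw [hev.fderiv_eq]
  congr 1
  refine Finset.sum_congr rfl fun α hα => ?_
  rw [hfg hx, hfg (reflect_mem_UU D hα hx)]

lemma dirac_congr (F : CliffordModel m A) (D : DunklData m) {f g : V m → A}
    (hfg : Set.EqOn f g (UU D)) {x : V m} (hx : x ∈ UU D) :
    Dirac F D f x = Dirac F D g x := by
  unfold Dirac
  refine Finset.sum_congr rfl fun j _ => ?_
  rw [T_congr D hfg hx j]

lemma contDiffOn_T (D : DunklData m) {f : V m → A} (hf : ContDiffOn ℝ ⊤ f (UU D)) (i : Fin m) :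
    ContDiffOn ℝ ⊤ (T D i f) (UU D) := by
  have hU := isOpen_UU D
  have h1 : ContDiffOn ℝ ⊤ (fun x => fderiv ℝ f x (EuclideanSpace.single i 1)) (UU D) :=
    (hf.fderiv_of_isOpen hU (by simp)).clm_apply contDiffOn_const
  refine ContDiffOn.add h1 (ContDiffOn.sum fun α hα => ?_)
  have hinner : ContDiff ℝ ⊤ fun x : V m => ⟪α, x⟫ :=
    ContDiff.inner ℝ contDiff_const contDiff_id
  have hsc : ContDiffOn ℝ ⊤ (fun x : V m => D.κ α * α i / ⟪α, x⟫) (UU D) :=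
    ContDiffOn.div contDiffOn_const hinner.contDiffOn fun x hx => hx.2 α hα
  refine hsc.smul (hf.sub ?_)
  exact hf.comp (contDiff_reflect α).contDiffOn fun x hx => reflect_mem_UU D hα hx

lemma contDiffOn_Dirac (F : CliffordModel m A) (D : DunklData m) {f : V m → A}
    (hf : ContDiffOn ℝ ⊤ f (UU D)) : ContDiffOn ℝ ⊤ (Dirac F D f) (UU D) := by
  unfold Dirac
  exact ContDiffOn.sum fun j _ => contDiffOn_const.mul (contDiffOn_T D hf j)

lemma contDiffOn_Dirac_iter (F : CliffordModel m A) (D : DunklData m) {f : V m → A}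
    (hf : ContDiffOn ℝ ⊤ f (UU D)) (t : ℕ) :
    ContDiffOn ℝ ⊤ ((Dirac F D)^[t] f) (UU D) := by
  induction t with
  | zero => exact hf
  | succ t ih =>
    rw [Function.iterate_succ_apply']
    exact contDiffOn_Dirac F D ih

lemma hasFDerivAt_one_sub_sq (x : V m) :
    HasFDerivAt (fun y : V m => 1 - ‖y‖ ^ 2) (-((2 : ℝ) • innerSL ℝ x)) x := by
  have h2 : HasFDerivAt (fun y : V m => ‖y‖ ^ 2) ((2 : ℝ) • innerSL ℝ x) x := by
    have h := (hasStrictFDerivAt_norm_sq x).hasFDerivAt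
    refine h.congr_fderiv ?_
    ext v
    simp [two_smul]
  have h3 := (hasFDerivAt_const (1 : ℝ) x).sub h2
  rwa [zero_sub] at h3

lemma hasFDerivAt_rpow_one_sub_sq (β : ℝ) {x : V m} (hx : ‖x‖ < 1) :
    HasFDerivAt (fun y : V m => ((1 - ‖y‖ ^ 2) ^ β : ℝ))
      ((β * (1 - ‖x‖ ^ 2) ^ (β - 1)) • (-((2 : ℝ) • innerSL ℝ x))) x := by
  have hpos : (0 : ℝ) < 1 - ‖x‖ ^ 2 := by nlinarith [norm_nonneg x]
  have h := (Real.hasDerivAt_rpow_const (p := β)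
      (Or.inl (ne_of_gt hpos))).comp_hasFDerivAt x (hasFDerivAt_one_sub_sq x)
  exact h

lemma contDiffOn_rpow_one_sub_sq (β : ℝ) :
    ContDiffOn ℝ ⊤ (fun y : V m => ((1 - ‖y‖ ^ 2) ^ β : ℝ)) (Metric.ball (0 : V m) 1) := by
  intro x hx
  rw [Metric.mem_ball, dist_zero_right] at hx
  have hpos : (0 : ℝ) < 1 - ‖x‖ ^ 2 := by nlinarith [norm_nonneg x]
  have hbase : ContDiffAt ℝ ⊤ (fun y : V m => 1 - ‖y‖ ^ 2) x :=
    (contDiff_const.sub (contDiff_norm_sq ℝ)).contDiffAt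
  exact ((Real.contDiffAt_rpow_const_of_ne (ne_of_gt hpos)).comp x hbase).contDiffWithinAt

lemma xv_eq_sum (F : CliffordModel m A) (x : V m) : xv F x = ∑ j, x j • ee F j := by
  have hx : ∑ j, x j • EuclideanSpace.single j 1 = x := by
    simpa [EuclideanSpace.basisFun_apply, EuclideanSpace.basisFun_repr] using
      (EuclideanSpace.basisFun (Fin m) ℝ).sum_repr x
  rw [xv]
  conv_lhs => rw [← hx]
  rw [map_sum, map_sum]
  refine Finset.sum_congr rfl fun j _ => ?_
  rw [_root_.map_smul, _root_.map_smul]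
  rfl

lemma inner_single_real (x : V m) (i : Fin m) : ⟪x, EuclideanSpace.single i (1 : ℝ)⟫ = x i := by
  simp [EuclideanSpace.inner_single_right]

/-- The fundamental product rule:
`D_k[(1-|x|²)^β f] = -2β (1-|x|²)^{β-1} x̱ f + (1-|x|²)^β D_k f` on `U`. -/
lemma dirac_rpow_smul (F : CliffordModel m A) (D : DunklData m) (β : ℝ) {f : V m → A}
    (hf : ContDiffOn ℝ ⊤ f (UU D)) {x : V m} (hx : x ∈ UU D) :
    Dirac F D (fun y => ((1 - ‖y‖ ^ 2) ^ β : ℝ) • f y) x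
      = (-2 * β * (1 - ‖x‖ ^ 2) ^ (β - 1)) • (xv F x * f x)
        + ((1 - ‖x‖ ^ 2) ^ β : ℝ) • Dirac F D f x := by
  have hx1 : ‖x‖ < 1 := norm_lt_one_of_mem D hx
  have hfd : DifferentiableAt ℝ f x :=
    (hf.contDiffAt ((isOpen_UU D).mem_nhds hx)).differentiableAt (by simp)
  have hp := hasFDerivAt_rpow_one_sub_sq β hx1
  have hprod : HasFDerivAt (fun y => ((1 - ‖y‖ ^ 2) ^ β : ℝ) • f y) _ x :=
    hp.smul hfd.hasFDerivAt
  set c : ℝ := -2 * β * (1 - ‖x‖ ^ 2) ^ (β - 1) with hc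
  have hT : ∀ i : Fin m, T D i (fun y => ((1 - ‖y‖ ^ 2) ^ β : ℝ) • f y) x
      = (c * x i) • f x + ((1 - ‖x‖ ^ 2) ^ β : ℝ) • T D i f x := by
    intro i
    simp only [T]
    rw [hprod.fderiv]
    have hsum : (∑ α ∈ D.Rplus, (D.κ α * α i / ⟪α, x⟫) •
          (((1 - ‖x‖ ^ 2) ^ β : ℝ) • f x
            - ((1 - ‖reflect α x‖ ^ 2) ^ β : ℝ) • f (reflect α x)))
        = ((1 - ‖x‖ ^ 2) ^ β : ℝ) • ∑ α ∈ D.Rplus, (D.κ α * α i / ⟪α, x⟫) •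
            (f x - f (reflect α x)) := by
      rw [Finset.smul_sum]
      refine Finset.sum_congr rfl fun α hα => ?_
      rw [norm_reflect (D.norm_two α (mem_R_of_plus D hα)), ← smul_sub, smul_comm]
    rw [hsum]
    have hder : (((1 - ‖x‖ ^ 2) ^ β : ℝ) • fderiv ℝ f x
          + ((β * (1 - ‖x‖ ^ 2) ^ (β - 1)) • (-((2 : ℝ) • innerSL ℝ x))).smulRight (f x))
          (EuclideanSpace.single i 1)
        = (c * x i) • f x
          + ((1 - ‖x‖ ^ 2) ^ β : ℝ) • fderiv ℝ f x (EuclideanSpace.single i 1) := by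
      have hL : ((β * (1 - ‖x‖ ^ 2) ^ (β - 1)) • (-((2 : ℝ) • innerSL ℝ x)))
            (EuclideanSpace.single i 1)
          = c * x i := by
        rw [ContinuousLinearMap.smul_apply, ContinuousLinearMap.neg_apply,
          ContinuousLinearMap.smul_apply,
          show ((innerSL ℝ x) (EuclideanSpace.single i 1) : ℝ) = x i from inner_single_real x i,
          hc]
        simp only [smul_eq_mul]
        ring
      rw [ContinuousLinearMap.add_apply, ContinuousLinearMap.smulRight_apply, hL]
      simp only [ContinuousLinearMap.coe_smul', Pi.smul_apply]
      abel
    rw [hder, smul_add, add_assoc]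
  have hD : Dirac F D (fun y => ((1 - ‖y‖ ^ 2) ^ β : ℝ) • f y) x
      = ∑ j : Fin m, (ee F j * ((c * x j) • f x)
          + ee F j * (((1 - ‖x‖ ^ 2) ^ β : ℝ) • T D j f x)) := by
    unfold Dirac
    refine Finset.sum_congr rfl fun j _ => ?_
    rw [hT j, mul_add]
  rw [hD, Finset.sum_add_distrib]
  congr 1
  · have : ∀ j : Fin m, ee F j * ((c * x j) • f x) = c • (x j • (ee F j * f x)) := by
      intro j
      rw [mul_smul_comm, mul_smul]
    simp only [this]
    rw [← Finset.smul_sum]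
    congr 1
    rw [xv_eq_sum, Finset.sum_mul]
    exact Finset.sum_congr rfl fun j _ => (smul_mul_assoc _ _ _).symm
  · simp only [mul_smul_comm]
    rw [← Finset.smul_sum]
    rfl

lemma cg_key (F : CliffordModel m A) (D : DunklData m) {M : V m → A}
    (hM : ContDiff ℝ ⊤ M) :
    ∀ (t : ℕ) (a : ℝ), ∀ x ∈ UU D,
      CG F D a t M x =
        ((1 - ‖x‖ ^ 2) ^ (-a) : ℝ) •
          (Dirac F D)^[t] (fun y => ((1 - ‖y‖ ^ 2) ^ (a + t) : ℝ) • M y) x := by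
  intro t
  induction t with
  | zero =>
    intro a x hx
    have hq : (0 : ℝ) < 1 - ‖x‖ ^ 2 := one_sub_sq_pos D hx
    show M x = ((1 - ‖x‖ ^ 2) ^ (-a) : ℝ) •
      (((1 - ‖x‖ ^ 2) ^ (a + ((0 : ℕ) : ℝ)) : ℝ) • M x)
    rw [Nat.cast_zero, add_zero, smul_smul, ← Real.rpow_add hq, neg_add_cancel,
      Real.rpow_zero, one_smul]
  | succ t ih =>
    intro a x hx
    have hq : (0 : ℝ) < 1 - ‖x‖ ^ 2 := one_sub_sq_pos D hx
    set N : V m → A := fun y => ((1 - ‖y‖ ^ 2) ^ (a + 1 + (t : ℝ)) : ℝ) • M y with hN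
    have hNfun : (fun y => ((1 - ‖y‖ ^ 2) ^ (a + ((t + 1 : ℕ) : ℝ)) : ℝ) • M y) = N := by
      funext y
      rw [hN]
      congr 2
      push_cast
      ring
    have hNs : ContDiffOn ℝ ⊤ N (UU D) :=
      ((contDiffOn_rpow_one_sub_sq _).mono Set.inter_subset_left).smul hM.contDiffOn
    have hHs : ContDiffOn ℝ ⊤ ((Dirac F D)^[t] N) (UU D) := contDiffOn_Dirac_iter F D hNs t
    have hIH : Set.EqOn (CG F D (a + 1) t M)
        (fun y => ((1 - ‖y‖ ^ 2) ^ (-(a + 1)) : ℝ) • (Dirac F D)^[t] N y) (UU D) :=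
      fun y hy => ih (a + 1) y hy
    show Dal F D a (CG F D (a + 1) t M) x = _
    rw [Dal, dirac_congr F D hIH hx, hIH hx,
      dirac_rpow_smul F D (-(a + 1)) hHs hx, hNfun, Function.iterate_succ_apply']
    rw [mul_smul_comm]
    set u : ℝ := (1 - ‖x‖ ^ 2) ^ (-a - 2 : ℝ) with hu
    have e1 : (1 - ‖x‖ ^ 2 : ℝ) ^ (-(a + 1) - 1 : ℝ) = u := by
      rw [hu]
      congr 1
      ring
    have e2 : (1 - ‖x‖ ^ 2 : ℝ) ^ (-(a + 1) : ℝ) = (1 - ‖x‖ ^ 2) * u := by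
      rw [hu, show (-(a + 1) : ℝ) = 1 + (-a - 2) by ring, Real.rpow_add hq, Real.rpow_one]
    have e3 : (1 - ‖x‖ ^ 2 : ℝ) ^ (-a : ℝ) = (1 - ‖x‖ ^ 2) * ((1 - ‖x‖ ^ 2) * u) := by
      rw [hu]
      conv_lhs => rw [show (-a : ℝ) = 1 + (1 + (-a - 2)) by ring, Real.rpow_add hq,
        Real.rpow_add hq, Real.rpow_one]
    rw [e1, e2, e3, smul_add, smul_smul, smul_smul, smul_smul]
    rw [show (1 - ‖x‖ ^ 2) * (-2 * -(a + 1) * u) = 2 * (a + 1) * ((1 - ‖x‖ ^ 2) * u) by ring]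
    exact add_sub_cancel_left _ _

end RodriguesAux

/-- Rodrigues formula on `B(1)`: for every left solid inner Dunkl
monogenic `M_k` of order `k`, every `α > -1` and every positive integer `t`,
`C^α_{t,μ}(M_k) = (1-|x̱|²)^{-α} D_k^t[(1-|x̱|²)^{α+t} M_k]`. -/
theorem cg_rodrigues
    {m : ℕ} {A : Type*} [NormedRing A] [NormedAlgebra ℝ A]
    (F : CliffordModel m A) (D : DunklData m)
    (k : ℕ) (M : V m → A) (hM : IsInner F D k M)
    (α : ℝ) (hα : -1 < α) (t : ℕ) (ht : 1 ≤ t) :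
    ∀ x ∈ Metric.ball (0 : V m) 1 ∩ Reg D,
      CG F D α t M x =
        ((1 - ‖x‖ ^ 2) ^ (-α) : ℝ) •
          (Dirac F D)^[t] (fun y => ((1 - ‖y‖ ^ 2) ^ (α + t) : ℝ) • M y) x := by
  intro x hx
  exact cg_key F D hM.1 t α x hx

end CGDunkl
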